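/- The pairing obtained by augmenting the one-dimensional intersection product satisfies Frobenius associativity: for all x, y, z ∈ EC_N, ⟨μ(x, y), z⟩ = ⟨x, μ(y, z)⟩. -/

import Mathlib

/-- Basis elements of the one-dimensional enlarged complex of period `N`:
points `P a`, elemental sticks `S a` (the interval `[a, a+1]`), and
infinitesimal sticks `I a`. -/
inductive B (N : ℕ) : Type where
  | P : ZMod N → B N
  | S : ZMod N → B N
  | I : ZMod N → B N
  deriving DecidableEq

/-- The enlarged one-dimensional chain complex: the free ℚ-vector space on `B N`. -/
abbrev EC (N : ℕ) : Type := B N →₀ ℚ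

namespace B

variable {N : ℕ}

/-- Codimension: 1 for points, 0 for sticks and infinitesimal sticks. -/
def cod : B N → ℕ
  | P _ => 1
  | _ => 0

/-- Basis element viewed in `EC N`. -/
noncomputable def e (u : B N) : EC N := Finsupp.single u 1

/-- The transverse intersection product on basis elements. -/
noncomputable def muB : B N → B N → EC N
  | P _, P _ => 0
  | P a, S b => if b = a ∨ b = a - 1 then Finsupp.single (P a) (1/2) else 0
  | S b, P a => if b = a ∨ b = a - 1 then Finsupp.single (P a) (1/2) else 0
  | P a, I b => if b = a then Finsupp.single (P a) (1/4) else 0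
  | I b, P a => if b = a then Finsupp.single (P a) (1/4) else 0
  | S a, S b =>
      if b = a then
        Finsupp.single (I a) (-1) + Finsupp.single (S a) 1 + Finsupp.single (I (a+1)) (-1)
      else if b = a + 1 then Finsupp.single (I (a+1)) 1
      else if b = a - 1 then Finsupp.single (I a) 1
      else 0
  | S a, I b => if b = a ∨ b = a + 1 then Finsupp.single (I b) (1/2) else 0
  | I b, S a => if b = a ∨ b = a + 1 then Finsupp.single (I b) (1/2) else 0
  | I a, I b => if b = a then Finsupp.single (I a) (1/4) else 0

/-- Boundary on basis elements: `∂ (S a) = P (a+1) - P a`, zero otherwise. -/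
noncomputable def bdB : B N → EC N
  | S a => Finsupp.single (P (a+1)) 1 - Finsupp.single (P a) 1
  | _ => 0

/-- Augmentation on basis elements. -/
def epsB : B N → ℚ
  | P _ => 1
  | _ => 0

end B

/-- Bilinear extension of the basis product to `EC N`. -/
noncomputable def mu {N : ℕ} (x y : EC N) : EC N :=
  x.sum fun u cu => y.sum fun v cv => (cu * cv) • B.muB u v

/-- Linear extension of the boundary to `EC N`. -/
noncomputable def bd {N : ℕ} (x : EC N) : EC N := x.sum fun u cu => cu • B.bdB u

/-- Augmentation `ε : EC N → ℚ`. -/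
noncomputable def eps {N : ℕ} (x : EC N) : ℚ := x.sum fun u cu => cu * B.epsB u

/-- The augmentation pairing `⟨x, y⟩ = ε (μ x y)`. -/
noncomputable def pair {N : ℕ} (x y : EC N) : ℚ := eps (mu x y)

/-- The subcomplex `C_N` spanned by points and elemental sticks. -/
noncomputable def Csub (N : ℕ) : Submodule ℚ (EC N) :=
  Submodule.span ℚ
    (Set.range (fun a : ZMod N => Finsupp.single (B.P a) (1 : ℚ)) ∪
     Set.range (fun a : ZMod N => Finsupp.single (B.S a) (1 : ℚ)))

namespace Frob
variable {N : ℕ}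

@[simp] lemma mu_zero_left (y : EC N) : mu 0 y = 0 := by
  simp [mu]

@[simp] lemma mu_zero_right (x : EC N) : mu x 0 = 0 := by
  simp [mu]

lemma mu_single_single (u v : B N) (c d : ℚ) :
    mu (Finsupp.single u c) (Finsupp.single v d) = (c * d) • B.muB u v := by
  unfold mu
  rw [Finsupp.sum_single_index, Finsupp.sum_single_index] <;> simp

lemma mu_add_left (x x' y : EC N) : mu (x + x') y = mu x y + mu x' y := by
  unfold mu
  rw [Finsupp.sum_add_index] <;> simp [add_mul, add_smul]

lemma mu_add_right (x y y' : EC N) : mu x (y + y') = mu x y + mu x y' := by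
  unfold mu
  rw [← Finsupp.sum_add]
  congr 1; ext u cu
  rw [Finsupp.sum_add_index] <;> simp [mul_add, add_smul]

lemma mu_smul_left (c : ℚ) (x y : EC N) : mu (c • x) y = c • mu x y := by
  unfold mu
  rw [Finsupp.sum_smul_index]
  · simp [Finsupp.smul_sum, mul_assoc, mul_smul]
  · simp

lemma mu_smul_right (c : ℚ) (x y : EC N) : mu x (c • y) = c • mu x y := by
  unfold mu
  rw [Finsupp.smul_sum]
  congr 1; ext u cu
  rw [Finsupp.sum_smul_index]
  · simp [Finsupp.smul_sum, mul_smul, mul_comm, mul_left_comm]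
  · simp

@[simp] lemma eps_zero : eps (0 : EC N) = 0 := by simp [eps]

@[simp] lemma eps_single (u : B N) (c : ℚ) : eps (Finsupp.single u c) = c * B.epsB u := by
  unfold eps
  rw [Finsupp.sum_single_index]; simp

lemma eps_add (x y : EC N) : eps (x + y) = eps x + eps y := by
  unfold eps
  rw [Finsupp.sum_add_index] <;> simp [add_mul]

lemma eps_smul (c : ℚ) (x : EC N) : eps (c • x) = c * eps x := by
  unfold eps
  rw [Finsupp.sum_smul_index]
  · simp [Finsupp.mul_sum, mul_assoc]
  · simp

end Frob
namespace Frob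
variable {N : ℕ}

lemma mu_ite_left (P : Prop) [Decidable P] (x y z : EC N) :
    mu (ite P x y) z = ite P (mu x z) (mu y z) := by split_ifs <;> rfl

lemma mu_ite_right (P : Prop) [Decidable P] (x y z : EC N) :
    mu x (ite P y z) = ite P (mu x y) (mu x z) := by split_ifs <;> rfl

lemma eps_ite (P : Prop) [Decidable P] (x y : EC N) :
    eps (ite P x y) = ite P (eps x) (eps y) := by split_ifs <;> rfl

set_option maxHeartbeats 4000000 in
lemma key (hN : 3 ≤ N) (u v w : B N) :
    eps (mu (mu (B.e u) (B.e v)) (B.e w)) = eps (mu (B.e u) (mu (B.e v) (B.e w))) := by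
  have h1 : (1 : ZMod N) ≠ 0 := by
    haveI : Fact (1 < N) := ⟨by omega⟩
    exact one_ne_zero
  have h2 : (2 : ZMod N) ≠ 0 := by
    intro h
    have h' : ((2 : ℕ) : ZMod N) = 0 := by exact_mod_cast h
    rw [ZMod.natCast_eq_zero_iff] at h'
    have := Nat.le_of_dvd (by norm_num) h'
    omega
  have h3 : ¬((1:ZMod N) = 2) := by intro h; apply h2; linear_combination -2*h
  have h4 : ¬((2:ZMod N) = 1) := by intro h; apply h2; linear_combination 2*h
  rcases u with a|a|a <;> rcases v with b|b|b <;> rcases w with c|c|c <;>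
    simp only [B.e, mu_single_single, B.muB, mu_ite_left, mu_ite_right, eps_ite,
      smul_ite, smul_add, smul_zero, smul_smul, Finsupp.smul_single,
      mu_add_left, mu_add_right, mu_zero_left, mu_zero_right,
      eps_add, eps_smul, eps_single, eps_zero, B.epsB, smul_eq_mul, eq_sub_iff_add_eq] <;>
    split_ifs <;> (try norm_num) <;> (try casesm* _ ∨ _) <;> (try subst_vars) <;>
      (try simp only [add_assoc, one_add_one_eq_two, left_eq_add, add_eq_left,
            add_right_inj, add_left_inj, eq_self_iff_true, not_true, or_true, true_or] at *) <;>
      (try contradiction) <;> (try subst_vars) <;> (try contradiction)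

end Frob

open Frob in
/-- Frobenius associativity of the augmentation pairing. -/
theorem pair_frobenius (N : ℕ) (hN : 3 ≤ N) :
    ∀ x y z : EC N, pair (mu x y) z = pair x (mu y z) := by
  intro x y z
  unfold pair
  induction x using Finsupp.induction_linear with
  | zero => simp
  | add f g hf hg => simp [mu_add_left, eps_add, hf, hg]
  | single u cu =>
    induction y using Finsupp.induction_linear with
    | zero => simp
    | add f g hf hg => simp [mu_add_left, mu_add_right, eps_add, hf, hg]
    | single v cv =>
      induction z using Finsupp.induction_linear with
      | zero => simp
      | add f g hf hg => simp [mu_add_right, eps_add, hf, hg]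
      | single w cw =>
        have e1 : Finsupp.single u cu = cu • B.e u := by simp [B.e, Finsupp.smul_single]
        have e2 : Finsupp.single v cv = cv • B.e v := by simp [B.e, Finsupp.smul_single]
        have e3 : Finsupp.single w cw = cw • B.e w := by simp [B.e, Finsupp.smul_single]
        rw [e1, e2, e3]
        simp only [mu_smul_left, mu_smul_right, eps_smul]
        rw [key hN u v w]
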